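/- Let p be a prime, p^r a prime power, and n ≥ p^r. Let λ be a partition of n and let H ≤ S_{p^r} be a subgroup whose action on B is transitive. Then the action of S_{n−p^r} on the set (Tab^λ)^H of H-fixed points of Tab^λ has exactly one orbit if and only if λ is p^r-quasistable, i.e. λ_1 ≥ p^r and λ_2 < p^r (where λ_2 := 0 if λ has a single part). -/

import Mathlib

/-- `f : Fin n → Fin ℓ` is a tableau of shape `lam`: the fiber over `i` has
cardinality `lam i`. -/
def TabP {n ℓ : ℕ} (lam : Fin ℓ → ℕ) (f : Fin n → Fin ℓ) : Prop :=
  ∀ i : Fin ℓ, (Finset.univ.filter fun a => f a = i).card = lam i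

section StmtSevenAux

open Finset

lemma exists_perm_comp {α β : Type*} [Fintype α] [DecidableEq β]
    (f g : α → β) (h : ∀ i, Fintype.card {x // f x = i} = Fintype.card {x // g x = i}) :
    ∃ σ : Equiv.Perm α, ∀ x, g (σ x) = f x := by
  classical
  let e : ∀ i, {x // f x = i} ≃ {x // g x = i} := fun i => Fintype.equivOfCardEq (h i)
  refine ⟨(Equiv.sigmaFiberEquiv f).symm.trans
    ((Equiv.sigmaCongrRight e).trans (Equiv.sigmaFiberEquiv g)), fun x => ?_⟩
  exact (e (f x) ⟨x, rfl⟩).2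

lemma tabP_comp' {n ℓ : ℕ} {f : Fin n → Fin ℓ} (σ : Equiv.Perm (Fin n)) (i : Fin ℓ) :
    (univ.filter fun a => (f ∘ σ) a = i).card = (univ.filter fun a => f a = i).card := by
  have h : (univ.filter fun a => (f ∘ σ) a = i)
      = (univ.filter fun a => f a = i).map σ.symm.toEmbedding := by
    ext a
    simp only [mem_filter, mem_univ, true_and, mem_map, Equiv.coe_toEmbedding,
      Function.comp_apply]
    constructor
    · intro h; exact ⟨σ a, h, σ.symm_apply_apply a⟩
    · rintro ⟨b, hb, rfl⟩; simpa using hb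
  rw [h, card_map]

lemma card_filter_lt (n m : ℕ) (h : m ≤ n) :
    (univ.filter fun a : Fin n => (a : ℕ) < m).card = m := by
  have h2 : (univ.filter fun a : Fin n => (a : ℕ) < m)
      = (univ : Finset (Fin m)).map (Fin.castLEEmb h) := by
    ext a
    simp only [mem_filter, mem_univ, true_and, mem_map]
    constructor
    · intro ha; exact ⟨⟨a, ha⟩, by ext; simp⟩
    · rintro ⟨b, rfl⟩; simpa using b.isLt
  rw [h2, card_map, card_univ, Fintype.card_fin]

lemma card_filter_ge (n m : ℕ) (h : m ≤ n) :
    (univ.filter fun a : Fin n => m ≤ (a : ℕ)).card = n - m := by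
  have h1 := card_filter_add_card_filter_not (s := (univ : Finset (Fin n)))
    (p := fun a => (a : ℕ) < m)
  have h2 : (univ.filter fun a : Fin n => ¬ (a : ℕ) < m)
      = univ.filter fun a : Fin n => m ≤ (a : ℕ) := by
    ext a; simp [not_lt]
  rw [card_filter_lt n m h, h2, card_univ, Fintype.card_fin] at h1
  omega

/-- The fiber of the first projection of a sigma type of `Fin`s. -/
def sigmaFstFiber {ℓ : ℕ} (lam : Fin ℓ → ℕ) (i : Fin ℓ) :
    {x : Σ j, Fin (lam j) // x.1 = i} ≃ Fin (lam i) where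
  toFun x := Fin.cast (congrArg lam x.2) x.1.2
  invFun b := ⟨⟨i, b⟩, rfl⟩
  left_inv := by rintro ⟨⟨j, b⟩, rfl⟩; rfl
  right_inv b := rfl

lemma exists_tabP {n ℓ : ℕ} {lam : Fin ℓ → ℕ} (hsum : ∑ i, lam i = n) :
    ∃ f : Fin n → Fin ℓ, TabP lam f := by
  have hcard : Fintype.card (Fin n) = Fintype.card (Σ i : Fin ℓ, Fin (lam i)) := by
    simp [Fintype.card_sigma, hsum]
  let e : Fin n ≃ Σ i : Fin ℓ, Fin (lam i) := Fintype.equivOfCardEq hcard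
  refine ⟨fun a => (e a).1, fun i => ?_⟩
  rw [← Fintype.card_subtype]
  rw [Fintype.card_congr ((e.subtypeEquiv (fun a => Iff.rfl)).trans (sigmaFstFiber lam i))]
  exact Fintype.card_fin _

lemma exists_tab_const {n ℓ : ℕ} {lam : Fin ℓ → ℕ} (hsum : ∑ i, lam i = n)
    (c : ℕ) (hc : c ≤ n) (j : Fin ℓ) (hj : c ≤ lam j) :
    ∃ f : Fin n → Fin ℓ, TabP lam f ∧ ∀ a : Fin n, n - c ≤ (a : ℕ) → f a = j := by
  obtain ⟨f0, hf0⟩ := exists_tabP hsum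
  have hTcard : (univ.filter fun a => f0 a = j).card = lam j := hf0 j
  obtain ⟨T', hT'sub, hT'card⟩ := Finset.exists_subset_card_eq
    (show c ≤ (univ.filter fun a => f0 a = j).card by omega)
  have hBcard : (univ.filter fun a : Fin n => n - c ≤ (a : ℕ)).card = c := by
    rw [card_filter_ge n (n - c) (Nat.sub_le _ _)]; omega
  have e1 : {x : Fin n // x ∈ univ.filter fun a : Fin n => n - c ≤ (a : ℕ)}
      ≃ {x : Fin n // x ∈ T'} :=
    Fintype.equivOfCardEq (by simp only [Fintype.card_coe, hBcard, hT'card])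
  have e2 : {x : Fin n // ¬ x ∈ univ.filter fun a : Fin n => n - c ≤ (a : ℕ)}
      ≃ {x : Fin n // ¬ x ∈ T'} :=
    Fintype.equivOfCardEq (by
      rw [Fintype.card_subtype_compl, Fintype.card_subtype_compl]
      simp only [Fintype.card_coe, hBcard, hT'card])
  set σ0 : Equiv.Perm (Fin n) := Equiv.subtypeCongr e1 e2 with hσ0
  refine ⟨f0 ∘ σ0, fun i => by rw [tabP_comp' σ0 i]; exact hf0 i, fun a ha => ?_⟩
  have hmem : a ∈ univ.filter fun a : Fin n => n - c ≤ (a : ℕ) := by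
    simp only [mem_filter, mem_univ, true_and]; exact ha
  have happ : σ0 a = (e1 ⟨a, hmem⟩ : Fin n) := by
    rw [hσ0]
    rw [Equiv.subtypeCongr]
    simp [Equiv.sumCompl_symm_apply_of_pos hmem]
  have hT'm : σ0 a ∈ T' := by rw [happ]; exact (e1 ⟨a, hmem⟩).2
  have := hT'sub hT'm
  simp only [mem_filter, mem_univ, true_and] at this
  exact this

lemma exists_perm_fix {n ℓ : ℕ} {lam : Fin ℓ → ℕ} (c : ℕ) {f g : Fin n → Fin ℓ}
    (hf : TabP lam f) (hg : TabP lam g) (j : Fin ℓ)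
    (hfB : ∀ a : Fin n, n - c ≤ (a : ℕ) → f a = j)
    (hgB : ∀ a : Fin n, n - c ≤ (a : ℕ) → g a = j) :
    ∃ σ : Equiv.Perm (Fin n), (∀ a : Fin n, n - c ≤ (a : ℕ) → σ a = a) ∧ f ∘ ⇑σ⁻¹ = g := by
  set m := n - c with hm
  have notpart : ∀ (h : Fin n → Fin ℓ), (∀ a : Fin n, m ≤ (a : ℕ) → h a = j) → ∀ i : Fin ℓ,
      (univ.filter fun a : Fin n => h a = i ∧ ¬ (a : ℕ) < m)
        = if i = j then univ.filter (fun a : Fin n => ¬ (a : ℕ) < m) else ∅ := by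
    intro h hB i
    split_ifs with hij
    · subst hij
      ext a
      simp only [mem_filter, mem_univ, true_and, and_iff_right_iff_imp]
      intro ha; exact hB a (not_lt.mp ha)
    · ext a
      simp only [mem_filter, mem_univ, true_and, notMem_empty, iff_false, not_and]
      intro ha hb
      exact absurd (ha.symm.trans (hB a (not_lt.mp hb))) hij
  have count_eq : ∀ i : Fin ℓ,
      (univ.filter fun a : Fin n => (a : ℕ) < m ∧ f a = i).card
        = (univ.filter fun a : Fin n => (a : ℕ) < m ∧ g a = i).card := by
    intro i
    have hf' := card_filter_add_card_filter_not
      (s := univ.filter fun a : Fin n => f a = i) (p := fun a : Fin n => (a : ℕ) < m)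
    have hg' := card_filter_add_card_filter_not
      (s := univ.filter fun a : Fin n => g a = i) (p := fun a : Fin n => (a : ℕ) < m)
    rw [filter_filter, filter_filter, hf i, notpart f hfB i] at hf'
    rw [filter_filter, filter_filter, hg i, notpart g hgB i] at hg'
    have h1 : (univ.filter fun a : Fin n => f a = i ∧ (a : ℕ) < m)
        = univ.filter fun a : Fin n => (a : ℕ) < m ∧ f a = i := by
      ext a; simp [and_comm]
    have h2 : (univ.filter fun a : Fin n => g a = i ∧ (a : ℕ) < m)
        = univ.filter fun a : Fin n => (a : ℕ) < m ∧ g a = i := by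
      ext a; simp [and_comm]
    rw [h1] at hf'; rw [h2] at hg'
    omega
  have hcard : ∀ i : Fin ℓ,
      Fintype.card {x : {a : Fin n // (a : ℕ) < m} // f x.1 = i}
        = Fintype.card {x : {a : Fin n // (a : ℕ) < m} // g x.1 = i} := by
    intro i
    have c1 := Fintype.card_congr (Equiv.subtypeSubtypeEquivSubtypeInter
      (fun a : Fin n => (a : ℕ) < m) (fun a => f a = i))
    have c2 := Fintype.card_congr (Equiv.subtypeSubtypeEquivSubtypeInter
      (fun a : Fin n => (a : ℕ) < m) (fun a => g a = i))
    rw [c1, c2, Fintype.card_subtype, Fintype.card_subtype]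
    exact count_eq i
  obtain ⟨σ', hσ'⟩ := exists_perm_comp
    (fun x : {a : Fin n // (a : ℕ) < m} => f x.1) (fun x => g x.1) hcard
  have hgen : ∀ b : Fin n, g (Equiv.Perm.ofSubtype σ' b) = f b := by
    intro b
    by_cases hb : (b : ℕ) < m
    · rw [Equiv.Perm.ofSubtype_apply_of_mem σ' hb]; exact hσ' ⟨b, hb⟩
    · rw [Equiv.Perm.ofSubtype_apply_of_not_mem σ' hb, hfB b (not_lt.mp hb),
        hgB b (not_lt.mp hb)]
  refine ⟨Equiv.Perm.ofSubtype σ', fun a ha =>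
    Equiv.Perm.ofSubtype_apply_of_not_mem σ' (not_lt.mpr ha), ?_⟩
  funext a
  show f ((Equiv.Perm.ofSubtype σ')⁻¹ a) = g a
  conv_rhs => rw [← (Equiv.Perm.ofSubtype σ').apply_symm_apply a]
  exact (hgen _).symm

end StmtSevenAux

/-- for a partition `λ` of `n` and a transitive subgroup `H ≤ S_{p^r}`,
the `S_{n−p^r}`-action on the `H`-fixed points of `Tab^λ` has exactly one orbit iff
`λ` is `p^r`-quasistable, i.e. `λ_1 ≥ p^r` and `λ_2 < p^r` (with `λ_2 := 0` if `λ`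
has a single part). -/
theorem stmt7 (p r n ℓ : ℕ) (hp : p.Prime) (hn : p ^ r ≤ n) (hl : 0 < ℓ)
    (lam : Fin ℓ → ℕ) (hanti : Antitone lam) (hpos : ∀ i, 0 < lam i)
    (hsum : ∑ i, lam i = n)
    (H : Subgroup (Equiv.Perm (Fin n)))
    (hH : ∀ σ ∈ H, ∀ a : Fin n, (a : ℕ) < n - p ^ r → σ a = a)
    (htrans : ∀ a b : Fin n, n - p ^ r ≤ (a : ℕ) → n - p ^ r ≤ (b : ℕ) →
      ∃ σ ∈ H, σ a = b) :
    (({f : Fin n → Fin ℓ | TabP lam f ∧ ∀ σ ∈ H, f ∘ ⇑σ⁻¹ = f}).Nonempty ∧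
      ∀ f ∈ {f : Fin n → Fin ℓ | TabP lam f ∧ ∀ σ ∈ H, f ∘ ⇑σ⁻¹ = f},
        ∀ g ∈ {f : Fin n → Fin ℓ | TabP lam f ∧ ∀ σ ∈ H, f ∘ ⇑σ⁻¹ = f},
          ∃ σ : Equiv.Perm (Fin n),
            (∀ a : Fin n, n - p ^ r ≤ (a : ℕ) → σ a = a) ∧ f ∘ ⇑σ⁻¹ = g) ↔
      (p ^ r ≤ lam ⟨0, hl⟩ ∧ ∀ h1 : 1 < ℓ, lam ⟨1, h1⟩ < p ^ r) := by
  have hq : 0 < p ^ r := pow_pos hp.pos r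
  have hn0 : 0 < n := lt_of_lt_of_le hq hn
  -- a tableau fixed by `H` is constant on `B`
  have const_of_mem : ∀ f : Fin n → Fin ℓ, (∀ σ ∈ H, f ∘ ⇑σ⁻¹ = f) →
      ∃ j : Fin ℓ, ∀ a : Fin n, n - p ^ r ≤ (a : ℕ) → f a = j := by
    intro f hf2
    set b0 : Fin n := ⟨n - 1, by omega⟩ with hb0
    refine ⟨f b0, fun a ha => ?_⟩
    obtain ⟨σ, hσ, hσa⟩ := htrans a b0 ha (by simp only [hb0]; omega)
    have h1 := congrFun (hf2 σ hσ) b0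
    have h2 : σ⁻¹ b0 = a := by rw [← hσa]; exact σ.symm_apply_apply a
    simp only [Function.comp_apply, h2] at h1
    exact h1
  -- if `f` is a tableau constant `= j` on `B`, then `p^r ≤ lam j`
  have ge_of_const : ∀ (f : Fin n → Fin ℓ) (j : Fin ℓ), TabP lam f →
      (∀ a : Fin n, n - p ^ r ≤ (a : ℕ) → f a = j) → p ^ r ≤ lam j := by
    intro f j hf hc
    have hsub : (Finset.univ.filter fun a : Fin n => n - p ^ r ≤ (a : ℕ))
        ⊆ Finset.univ.filter fun a : Fin n => f a = j := by
      intro a ha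
      simp only [Finset.mem_filter, Finset.mem_univ, true_and] at ha ⊢
      exact hc a ha
    have := Finset.card_le_card hsub
    rw [card_filter_ge n (n - p ^ r) (Nat.sub_le _ _), hf j] at this
    omega
  -- a tableau constant on `B` is fixed by `H`
  have fix_of_const : ∀ (f : Fin n → Fin ℓ) (j : Fin ℓ),
      (∀ a : Fin n, n - p ^ r ≤ (a : ℕ) → f a = j) → ∀ σ ∈ H, f ∘ ⇑σ⁻¹ = f := by
    intro f j hc σ hσ
    funext a
    simp only [Function.comp_apply]
    by_cases ha : (a : ℕ) < n - p ^ r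
    · rw [hH σ⁻¹ (inv_mem hσ) a ha]
    · have h2 : ¬ ((σ⁻¹ a : Fin n) : ℕ) < n - p ^ r := by
        intro hlt
        have h3 := hH σ hσ _ hlt
        rw [show σ (σ⁻¹ a) = a from σ.apply_symm_apply a] at h3
        rw [h3] at ha
        exact ha hlt
      rw [hc _ (not_lt.mp h2), hc _ (not_lt.mp ha)]
  constructor
  · rintro ⟨⟨f, hf1, hf2⟩, htr⟩
    obtain ⟨j, hj⟩ := const_of_mem f hf2
    have hjge := ge_of_const f j hf1 hj
    have h0le : lam j ≤ lam ⟨0, hl⟩ := hanti (by simp [Fin.le_def])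
    refine ⟨le_trans hjge h0le, fun h1 => ?_⟩
    by_contra hge
    push_neg at hge
    have h1ge : p ^ r ≤ lam ⟨0, hl⟩ := le_trans hge (hanti (by simp [Fin.le_def]))
    obtain ⟨f', hf'1, hf'2⟩ := exists_tab_const hsum (p ^ r) hn ⟨0, hl⟩ h1ge
    obtain ⟨g', hg'1, hg'2⟩ := exists_tab_const hsum (p ^ r) hn ⟨1, h1⟩ hge
    obtain ⟨σ, hσfix, hσeq⟩ := htr f' ⟨hf'1, fix_of_const f' _ hf'2⟩
      g' ⟨hg'1, fix_of_const g' _ hg'2⟩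
    set b0 : Fin n := ⟨n - 1, by omega⟩ with hb0
    have hb0B : n - p ^ r ≤ (b0 : ℕ) := by simp only [hb0]; omega
    have hinv : σ⁻¹ b0 = b0 := by
      conv_lhs => rw [← hσfix b0 hb0B]
      exact σ.symm_apply_apply b0
    have := congrFun hσeq b0
    simp only [Function.comp_apply, hinv] at this
    rw [hf'2 b0 hb0B, hg'2 b0 hb0B] at this
    exact absurd (congrArg Fin.val this) (by simp)
  · rintro ⟨h1, h2⟩
    have uniq : ∀ j : Fin ℓ, p ^ r ≤ lam j → j = ⟨0, hl⟩ := by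
      intro j hj
      by_contra hne
      have hj1 : 1 ≤ (j : ℕ) := by
        rcases Nat.eq_zero_or_pos (j : ℕ) with h | h
        · exact absurd (Fin.ext h) hne
        · exact h
      have hℓ : 1 < ℓ := lt_of_le_of_lt hj1 j.isLt
      have := hanti (show (⟨1, hℓ⟩ : Fin ℓ) ≤ j by simp [Fin.le_def]; omega)
      have := h2 hℓ
      omega
    constructor
    · obtain ⟨f, hf1, hf2⟩ := exists_tab_const hsum (p ^ r) hn ⟨0, hl⟩ h1
      exact ⟨f, hf1, fix_of_const f _ hf2⟩
    · rintro f ⟨hf1, hf2⟩ g ⟨hg1, hg2⟩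
      obtain ⟨jf, hjf⟩ := const_of_mem f hf2
      obtain ⟨jg, hjg⟩ := const_of_mem g hg2
      have hjf0 : jf = ⟨0, hl⟩ := uniq jf (ge_of_const f jf hf1 hjf)
      have hjg0 : jg = ⟨0, hl⟩ := uniq jg (ge_of_const g jg hg1 hjg)
      subst hjf0; rw [hjg0] at hjg
      exact exists_perm_fix (p ^ r) hf1 hg1 ⟨0, hl⟩ hjf hjg
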